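/- Fix an integer n ≥ 4, and let t = Σ_{i<j} aᵢaⱼ ∈ S. Then: (1) ψ_σ(t) = t for every σ ∈ Sₙ; (2) there is no polynomial P ∈ R with φ_σ(P) = P for all σ ∈ Sₙ and π(P) = t; (3) the polynomial P₀ = Σ_{i<j} (aᵢ⁺aⱼ⁺ + aᵢ⁻aⱼ⁻) satisfies φ_σ(P₀) = P₀ for all σ ∈ Sₙ and π(P₀) = 2t. In particular the map from Sₙ-invariants of R to Sₙ-invariants of S induced by π is not surjective, and its cokernel contains an element of order 2. -/

import Mathlib

set_option synthInstance.maxHeartbeats 1000000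
set_option maxHeartbeats 1000000

open MvPolynomial

/-- The signed permutation of the `2n` variables `aᵢ⁺ = (i, true)`, `aᵢ⁻ = (i, false)`
associated to `σ ∈ Sₙ`: it sends `aᵢ^ε` to `a_{σ(i)}^{ε·sgn σ}`. -/
def signedVar {n : ℕ} (σ : Equiv.Perm (Fin n)) (p : Fin n × Bool) : Fin n × Bool :=
  (σ p.1, if Equiv.Perm.sign σ = 1 then p.2 else !p.2)

/-- The ring automorphism `φ_σ` of `R = ℤ[a₁⁺, a₁⁻, …, aₙ⁺, aₙ⁻]` induced by the signed
permutation action of `σ ∈ Sₙ` on the variables. -/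
noncomputable def phi {n : ℕ} (σ : Equiv.Perm (Fin n)) :
    MvPolynomial (Fin n × Bool) ℤ →ₐ[ℤ] MvPolynomial (Fin n × Bool) ℤ :=
  MvPolynomial.rename (signedVar σ)

/-- The ring automorphism `ψ_σ` of `S = ℤ[a₁, …, aₙ]` with `ψ_σ(aᵢ) = a_{σ(i)}` for `σ`
even and `ψ_σ(aᵢ) = −a_{σ(i)}` for `σ` odd. -/
noncomputable def psi {n : ℕ} (σ : Equiv.Perm (Fin n)) :
    MvPolynomial (Fin n) ℤ →ₐ[ℤ] MvPolynomial (Fin n) ℤ :=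
  aeval (fun i : Fin n =>
    if Equiv.Perm.sign σ = 1 then (X (σ i) : MvPolynomial (Fin n) ℤ) else - X (σ i))

/-- The `ℤ`-algebra homomorphism `π : R → S = ℤ[a₁, …, aₙ]` with `π(aᵢ⁺) = aᵢ` and
`π(aᵢ⁻) = −aᵢ`. -/
noncomputable def piMap {n : ℕ} :
    MvPolynomial (Fin n × Bool) ℤ →ₐ[ℤ] MvPolynomial (Fin n) ℤ :=
  aeval (fun p : Fin n × Bool => if p.2 then (X p.1 : MvPolynomial (Fin n) ℤ) else - X p.1)

section stmt6helpers

open Finset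

variable {n : ℕ} {M : Type*} [AddCommMonoid M]

private lemma sum_Ioi_univ' (F : Fin n → Fin n → M) (i : Fin n) :
    ∑ j ∈ Finset.Ioi i, F i j = ∑ j : Fin n, if i < j then F i j else 0 := by
  rw [← Finset.filter_lt_eq_Ioi, Finset.sum_filter]

private lemma pairSum' (F : Fin n → Fin n → M) :
    ∑ i : Fin n, ∑ j ∈ Finset.Ioi i, (F i j + F j i)
      = ∑ p : Fin n × Fin n, if p.1 ≠ p.2 then F p.1 p.2 else 0 := by
  have key : ∀ i j : Fin n, (if i ≠ j then F i j else 0)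
      = (if i < j then F i j else 0) + (if j < i then F i j else 0) := by
    intro i j
    rcases lt_trichotomy i j with h | h | h
    · simp [h, h.ne, asymm h]
    · simp [h]
    · simp [h, h.ne', asymm h]
  rw [Fintype.sum_prod_type]
  simp_rw [key, Finset.sum_add_distrib, sum_Ioi_univ']
  congr 1
  rw [Finset.sum_comm]
  exact Finset.sum_congr rfl fun i _ => sum_Ioi_univ' (fun a b => F b a) i

private lemma doubled_sum' (F : Fin n → Fin n → M) (hF : ∀ i j, F i j = F j i) :
    (∑ i : Fin n, ∑ j ∈ Finset.Ioi i, F i j) + (∑ i : Fin n, ∑ j ∈ Finset.Ioi i, F i j)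
      = ∑ p : Fin n × Fin n, if p.1 ≠ p.2 then F p.1 p.2 else 0 := by
  rw [← Finset.sum_add_distrib]
  rw [show (fun i => (∑ j ∈ Finset.Ioi i, F i j) + ∑ j ∈ Finset.Ioi i, F i j)
      = fun i => ∑ j ∈ Finset.Ioi i, (F i j + F j i) from funext fun i => by
    rw [← Finset.sum_add_distrib]
    exact Finset.sum_congr rfl fun j _ => by rw [hF i j]]
  exact pairSum' F

private lemma pairSum_reindex' (σ : Equiv.Perm (Fin n)) (F : Fin n → Fin n → M) :
    ∑ p : Fin n × Fin n, (if p.1 ≠ p.2 then F (σ p.1) (σ p.2) else 0)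
      = ∑ p : Fin n × Fin n, if p.1 ≠ p.2 then F p.1 p.2 else 0 := by
  apply Fintype.sum_equiv (Equiv.prodCongr σ σ)
  intro p
  simp [Equiv.prodCongr_apply, EmbeddingLike.apply_eq_iff_eq]

private lemma reindex_Ioi' {τ : Type*} (σ : Equiv.Perm (Fin n))
    (F : Fin n → Fin n → MvPolynomial τ ℤ) (hF : ∀ i j, F i j = F j i) :
    ∑ i : Fin n, ∑ j ∈ Finset.Ioi i, F (σ i) (σ j)
      = ∑ i : Fin n, ∑ j ∈ Finset.Ioi i, F i j := by
  have h2 : (2 : MvPolynomial τ ℤ) ≠ 0 := by norm_num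
  apply mul_left_cancel₀ h2
  rw [two_mul, two_mul, doubled_sum' _ (fun i j => hF (σ i) (σ j)), doubled_sum' F hF]
  exact pairSum_reindex' σ F

lemma psi_t' (σ : Equiv.Perm (Fin n)) :
    psi σ (∑ i : Fin n, ∑ j ∈ Finset.Ioi i, X i * X j)
      = ∑ i : Fin n, ∑ j ∈ Finset.Ioi i, X i * X j := by
  have hX : ∀ i j : Fin n, psi σ (X i * X j) = X (σ i) * X (σ j) := by
    intro i j
    rw [map_mul]
    by_cases h : Equiv.Perm.sign σ = 1 <;> simp [psi, h]
  rw [map_sum]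
  simp_rw [map_sum, hX]
  exact reindex_Ioi' σ (fun i j => X i * X j) fun i j => mul_comm _ _

lemma phi_P0' (σ : Equiv.Perm (Fin n)) :
    phi σ (∑ i : Fin n, ∑ j ∈ Finset.Ioi i,
        (X (i, true) * X (j, true) + X (i, false) * X (j, false)))
      = ∑ i : Fin n, ∑ j ∈ Finset.Ioi i,
          (X (i, true) * X (j, true) + X (i, false) * X (j, false)) := by
  have hX : ∀ i j : Fin n,
      phi σ (X (i, true) * X (j, true) + X (i, false) * X (j, false))
        = X (σ i, true) * X (σ j, true) + X (σ i, false) * X (σ j, false) := by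
    intro i j
    show (rename (signedVar σ)) _ = _
    rw [map_add, map_mul, map_mul, rename_X, rename_X, rename_X, rename_X]
    by_cases h : Equiv.Perm.sign σ = 1
    · simp [signedVar, h]
    · simp only [signedVar, h, if_false]
      ring_nf
      simp [add_comm]
  rw [map_sum]
  simp_rw [map_sum, hX]
  exact reindex_Ioi' σ
    (fun i j => X (i, true) * X (j, true) + X (i, false) * X (j, false))
    fun i j => by ring

lemma piMap_P0' :
    piMap (∑ i : Fin n, ∑ j ∈ Finset.Ioi i,
        (X (i, true) * X (j, true) + X (i, false) * X (j, false)))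
      = 2 • (∑ i : Fin n, ∑ j ∈ Finset.Ioi i, X i * X j) := by
  rw [map_sum, Finset.smul_sum]
  refine Finset.sum_congr rfl fun i _ => ?_
  rw [map_sum, Finset.smul_sum]
  refine Finset.sum_congr rfl fun j _ => ?_
  rw [map_add, map_mul, map_mul]
  simp only [piMap, aeval_X, if_true, if_false]
  norm_num [two_smul]

noncomputable def dMon (i0 i1 : Fin n) : Fin n →₀ ℕ :=
  Finsupp.single i0 1 + Finsupp.single i1 1

noncomputable def sMon (i0 i1 : Fin n) (ε δ : Bool) : (Fin n × Bool) →₀ ℕ :=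
  Finsupp.single (i0, ε) 1 + Finsupp.single (i1, δ) 1

lemma mapDomain_sMon (i0 i1 : Fin n) (ε δ : Bool) :
    Finsupp.mapDomain Prod.fst (sMon i0 i1 ε δ) = dMon i0 i1 := by
  rw [sMon, Finsupp.mapDomain_add, Finsupp.mapDomain_single, Finsupp.mapDomain_single]
  rfl

lemma sMon_apply (i0 i1 : Fin n) (ε δ : Bool) (p : Fin n × Bool) :
    sMon i0 i1 ε δ p = (if (i0, ε) = p then 1 else 0) + (if (i1, δ) = p then 1 else 0) := by
  simp [sMon, Finsupp.single_apply]

lemma sMon_eq_iff {i0 i1 : Fin n} (h01 : i0 ≠ i1) (ε δ ε' δ' : Bool) :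
    sMon i0 i1 ε δ = sMon i0 i1 ε' δ' ↔ ε = ε' ∧ δ = δ' := by
  constructor
  · intro h
    constructor
    · by_contra hne
      have h0 := DFunLike.congr_fun h (i0, ε')
      rw [sMon_apply, sMon_apply] at h0
      simp [Prod.ext_iff, hne, Ne.symm h01] at h0
    · by_contra hne
      have h1 := DFunLike.congr_fun h (i1, δ')
      rw [sMon_apply, sMon_apply] at h1
      simp [Prod.ext_iff, hne, h01] at h1
  · rintro ⟨rfl, rfl⟩; rfl

lemma XX_eq {τ : Type*} (i j : τ) (a : ℤ) :
    C a * (X i * X j) = monomial (Finsupp.single i 1 + Finsupp.single j 1) a := by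
  rw [monomial_single_add, pow_one]
  rw [show monomial (Finsupp.single j 1) a = X j * C a by
    rw [← zero_add (Finsupp.single j 1), add_comm, monomial_single_add, pow_one,
      monomial_zero']]
  ring

lemma piMap_mon (u : (Fin n × Bool) →₀ ℕ) :
    ∀ a : ℤ, ∃ m : ℤ, piMap (monomial u a)
      = monomial (Finsupp.mapDomain Prod.fst u) (m * a) := by
  induction u using Finsupp.induction with
  | zero =>
    intro a
    refine ⟨1, ?_⟩
    simp [piMap, monomial_zero', Finsupp.mapDomain_zero, one_mul]
  | single_add p k f hp hk ih =>
    intro a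
    obtain ⟨m, hm⟩ := ih a
    rw [monomial_single_add, map_mul, map_pow, hm, Finsupp.mapDomain_add,
      Finsupp.mapDomain_single]
    by_cases hb : p.2
    · refine ⟨m, ?_⟩
      rw [show piMap (X p) = (X p.1 : MvPolynomial (Fin n) ℤ) from by simp [piMap, hb],
        ← monomial_single_add]
    · refine ⟨m * (-1) ^ k, ?_⟩
      rw [show piMap (X p) = (-X p.1 : MvPolynomial (Fin n) ℤ) from by simp [piMap, hb]]
      rw [neg_pow, show ((-1 : MvPolynomial (Fin n) ℤ)) ^ k = C ((-1 : ℤ) ^ k) by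
        rw [map_pow, map_neg, map_one]]
      rw [mul_assoc, ← monomial_single_add, C_mul_monomial]
      congr 1
      ring

lemma classify {i0 i1 : Fin n} (h01 : i0 ≠ i1) (u : (Fin n × Bool) →₀ ℕ)
    (h : Finsupp.mapDomain Prod.fst u = dMon i0 i1) :
    ∃ ε δ : Bool, u = sMon i0 i1 ε δ := by
  have happ : ∀ i : Fin n, u (i, true) + u (i, false)
      = (Finsupp.mapDomain Prod.fst u) i := by
    intro i
    rw [Finsupp.mapDomain, Finsupp.sum_apply, Finsupp.sum_fintype _ _ (by simp)]
    simp [Finsupp.single_apply, Fintype.sum_prod_type, Finset.sum_add_distrib]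
  rw [h] at happ
  have hd : ∀ i : Fin n, (dMon i0 i1) i
      = (if i0 = i then 1 else 0) + (if i1 = i then 1 else 0) := by
    intro i; simp [dMon, Finsupp.single_apply]
  have h0 := happ i0; have h1 := happ i1
  rw [hd, if_pos rfl, if_neg h01.symm] at h0
  rw [hd, if_neg h01, if_pos rfl] at h1
  have hrest : ∀ i : Fin n, i ≠ i0 → i ≠ i1 → u (i, true) = 0 ∧ u (i, false) = 0 := by
    intro i hi0 hi1
    have := happ i
    rw [hd, if_neg (Ne.symm hi0), if_neg (Ne.symm hi1)] at this
    omega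
  have key : ∀ ε δ : Bool, u (i0, ε) = 1 → u (i0, !ε) = 0 → u (i1, δ) = 1 → u (i1, !δ) = 0 →
      u = sMon i0 i1 ε δ := by
    intro ε δ k1 k2 k3 k4
    ext p
    obtain ⟨i, b⟩ := p
    rw [sMon_apply]
    by_cases hi0 : i = i0
    · subst hi0
      rcases (by cases b <;> cases ε <;> simp_all : b = ε ∨ b = !ε) with rfl | rfl
      · simp [Prod.ext_iff, Ne.symm h01, k1]
      · simp [Prod.ext_iff, Ne.symm h01, k2, (by cases ε <;> simp : ¬ ε = !ε)]
    · by_cases hi1 : i = i1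
      · subst hi1
        rcases (by cases b <;> cases δ <;> simp_all : b = δ ∨ b = !δ) with rfl | rfl
        · simp [Prod.ext_iff, h01, k3]
        · simp [Prod.ext_iff, h01, k4, (by cases δ <;> simp : ¬ δ = !δ)]
      · have hr := hrest i hi0 hi1
        rw [if_neg (fun hh => hi0 (congrArg Prod.fst hh).symm),
          if_neg (fun hh => hi1 (congrArg Prod.fst hh).symm)]
        cases b
        · simpa using hr.2
        · simpa using hr.1
  rcases (by omega : u (i0,true) = 1 ∧ u (i0,false) = 0 ∨ u (i0,true) = 0 ∧ u (i0,false) = 1)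
    with ⟨a1,a2⟩ | ⟨a1,a2⟩ <;>
  rcases (by omega : u (i1,true) = 1 ∧ u (i1,false) = 0 ∨ u (i1,true) = 0 ∧ u (i1,false) = 1)
    with ⟨b1,b2⟩ | ⟨b1,b2⟩
  · exact ⟨true, true, key true true a1 a2 b1 b2⟩
  · exact ⟨true, false, key true false a1 a2 b2 b1⟩
  · exact ⟨false, true, key false true a2 a1 b1 b2⟩
  · exact ⟨false, false, key false false a2 a1 b2 b1⟩

lemma coeff_t' {i0 i1 : Fin n} (h01 : i0 < i1) (hmin : ∀ k : Fin n, i0 ≤ k) :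
    coeff (dMon i0 i1)
      (∑ i : Fin n, ∑ j ∈ Finset.Ioi i, (X i * X j : MvPolynomial (Fin n) ℤ)) = 1 := by
  have hXX : ∀ i j : Fin n, (X i * X j : MvPolynomial (Fin n) ℤ)
      = monomial (Finsupp.single i 1 + Finsupp.single j 1) 1 := by
    intro i j; rw [← XX_eq]; simp
  simp_rw [coeff_sum, hXX, coeff_monomial]
  rw [Finset.sum_eq_single i0]
  · rw [Finset.sum_eq_single i1]
    · rw [show dMon i0 i1 = Finsupp.single i0 1 + Finsupp.single i1 1 from rfl, if_pos rfl]
    · intro j _ hne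
      rw [if_neg]
      intro heq
      have hc := DFunLike.congr_fun heq i1
      simp [dMon, Finsupp.single_apply, h01.ne, hne] at hc
    · intro hmem; exact absurd (Finset.mem_Ioi.mpr h01) hmem
  · intro i _ hne
    apply Finset.sum_eq_zero
    intro j hj
    rw [if_neg]
    intro heq
    have hj' : i < j := Finset.mem_Ioi.mp hj
    have hji0 : j ≠ i0 := fun h => absurd (h ▸ hj') (not_lt.mpr (hmin i))
    have hc := DFunLike.congr_fun heq i0
    simp [dMon, Finsupp.single_apply, hne, hji0, h01.ne'] at hc
  · intro h; exact absurd (Finset.mem_univ i0) h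

lemma coeff_piMap {i0 i1 : Fin n} (h01 : i0 ≠ i1) (Q : MvPolynomial (Fin n × Bool) ℤ) :
    coeff (dMon i0 i1) (piMap Q)
      = coeff (sMon i0 i1 true true) Q - coeff (sMon i0 i1 true false) Q
        - coeff (sMon i0 i1 false true) Q + coeff (sMon i0 i1 false false) Q := by
  induction Q using MvPolynomial.induction_on' with
  | add p q hp hq =>
    rw [map_add]
    simp only [coeff_add]
    rw [hp, hq]
    ring
  | monomial u a =>
    by_cases h : Finsupp.mapDomain Prod.fst u = dMon i0 i1
    · obtain ⟨ε, δ, rfl⟩ := classify h01 u h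
      have hC : piMap (C a : MvPolynomial (Fin n × Bool) ℤ) = C a := by simp [piMap]
      have hpm : piMap (monomial (sMon i0 i1 ε δ) a)
          = monomial (dMon i0 i1) ((if ε then 1 else -1) * (if δ then 1 else -1) * a) := by
        rw [show (monomial (sMon i0 i1 ε δ) a : MvPolynomial (Fin n × Bool) ℤ)
            = C a * (X (i0, ε) * X (i1, δ)) from (XX_eq _ _ a).symm]
        rw [map_mul, map_mul, hC]
        rcases ε <;> rcases δ <;>
          · simp only [piMap, aeval_X, if_true, if_false, Bool.false_eq_true]
            rw [show (dMon i0 i1 : Fin n →₀ ℕ)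
                = Finsupp.single i0 1 + Finsupp.single i1 1 from rfl, ← XX_eq]
            push_cast [map_mul, map_neg, map_one]
            ring
      rw [hpm, coeff_monomial, if_pos rfl, coeff_monomial, coeff_monomial,
        coeff_monomial, coeff_monomial]
      rcases ε <;> rcases δ <;>
        simp [sMon_eq_iff h01]
    · obtain ⟨m, hm⟩ := piMap_mon u a
      rw [hm, coeff_monomial, if_neg h]
      have hne : ∀ ε δ : Bool, u ≠ sMon i0 i1 ε δ := by
        intro ε δ hu
        rw [hu, mapDomain_sMon] at h
        exact h rfl
      rw [coeff_monomial, coeff_monomial, coeff_monomial, coeff_monomial,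
        if_neg (hne _ _), if_neg (hne _ _), if_neg (hne _ _), if_neg (hne _ _)]
      ring

lemma no_lift {n : ℕ} (hn : 4 ≤ n) :
    ¬ ∃ P : MvPolynomial (Fin n × Bool) ℤ,
      (∀ σ : Equiv.Perm (Fin n), phi σ P = P) ∧
        piMap P = ∑ i : Fin n, ∑ j ∈ Finset.Ioi i, X i * X j := by
  rintro ⟨P, hinv, hπ⟩
  obtain ⟨i0, hv0⟩ : ∃ i : Fin n, i.val = 0 := ⟨⟨0, by omega⟩, rfl⟩
  obtain ⟨i1, hv1⟩ : ∃ i : Fin n, i.val = 1 := ⟨⟨1, by omega⟩, rfl⟩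
  obtain ⟨i2, hv2⟩ : ∃ i : Fin n, i.val = 2 := ⟨⟨2, by omega⟩, rfl⟩
  obtain ⟨i3, hv3⟩ : ∃ i : Fin n, i.val = 3 := ⟨⟨3, by omega⟩, rfl⟩
  have h01 : i0 ≠ i1 := by simp [Fin.ext_iff, hv0, hv1]
  have hlt : i0 < i1 := by simp [Fin.lt_def, hv0, hv1]
  have hmin : ∀ k : Fin n, i0 ≤ k := fun k => by simp [Fin.le_def, hv0]
  have h23 : i2 ≠ i3 := by simp [Fin.ext_iff, hv2, hv3]
  set σ : Equiv.Perm (Fin n) := Equiv.swap i2 i3 with hσdef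
  have hsgn : Equiv.Perm.sign σ ≠ 1 := by
    rw [hσdef, Equiv.Perm.sign_swap h23]
    decide
  have hσ0 : σ i0 = i0 :=
    Equiv.swap_apply_of_ne_of_ne (by simp [Fin.ext_iff, hv0, hv2])
      (by simp [Fin.ext_iff, hv0, hv3])
  have hσ1 : σ i1 = i1 :=
    Equiv.swap_apply_of_ne_of_ne (by simp [Fin.ext_iff, hv1, hv2])
      (by simp [Fin.ext_iff, hv1, hv3])
  have hinj : Function.Injective (signedVar σ) := by
    intro p q hpq
    have h1 : σ p.1 = σ q.1 := congrArg Prod.fst hpq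
    have h2 := congrArg Prod.snd hpq
    simp only [signedVar] at h2
    rw [if_neg hsgn, if_neg hsgn] at h2
    have hb : p.2 = q.2 := by
      cases hp2 : p.2 <;> cases hq2 : q.2 <;> simp_all
    exact Prod.ext (σ.injective h1) hb
  have hmapD : ∀ ε δ : Bool,
      Finsupp.mapDomain (signedVar σ) (sMon i0 i1 ε δ) = sMon i0 i1 (!ε) (!δ) := by
    intro ε δ
    rw [sMon, Finsupp.mapDomain_add, Finsupp.mapDomain_single, Finsupp.mapDomain_single]
    simp [signedVar, hsgn, hσ0, hσ1, sMon]
  have hflip : ∀ ε δ : Bool,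
      coeff (sMon i0 i1 ε δ) P = coeff (sMon i0 i1 (!ε) (!δ)) P := by
    intro ε δ
    have h1 := coeff_rename_mapDomain (signedVar σ) hinj P (sMon i0 i1 ε δ)
    rw [hmapD ε δ] at h1
    rw [show rename (signedVar σ) P = P from hinv σ] at h1
    exact h1.symm
  have hmain := coeff_piMap h01 P
  rw [hπ, coeff_t' hlt hmin] at hmain
  have e1 := hflip true true
  have e2 := hflip true false
  simp only [Bool.not_true, Bool.not_false] at e1 e2
  have key : ∀ x y : ℤ, 1 = x - y - y + x → False := by intro x y h; omega
  rw [← e1, ← e2] at hmain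
  exact key _ _ hmain

end stmt6helpers

/-- Fix `n ≥ 4` and let `t = Σ_{i<j} aᵢaⱼ ∈ S`.  Then
(1) `ψ_σ(t) = t` for every `σ ∈ Sₙ`;
(2) there is no `P ∈ R` with `φ_σ(P) = P` for all `σ` and `π(P) = t`;
(3) `P₀ = Σ_{i<j} (aᵢ⁺aⱼ⁺ + aᵢ⁻aⱼ⁻)` satisfies `φ_σ(P₀) = P₀` for all `σ` and
`π(P₀) = 2t`.
In particular the map induced by `π` from `Sₙ`-invariants of `R` to `Sₙ`-invariants of
`S` is not surjective, and its cokernel contains an element of order `2`. -/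
theorem stmt6 (n : ℕ) (hn : 4 ≤ n) :
    (∀ σ : Equiv.Perm (Fin n),
      psi σ (∑ i : Fin n, ∑ j ∈ Finset.Ioi i, X i * X j)
        = ∑ i : Fin n, ∑ j ∈ Finset.Ioi i, X i * X j) ∧
    (¬ ∃ P : MvPolynomial (Fin n × Bool) ℤ,
      (∀ σ : Equiv.Perm (Fin n), phi σ P = P) ∧
        piMap P = ∑ i : Fin n, ∑ j ∈ Finset.Ioi i, X i * X j) ∧
    ((∀ σ : Equiv.Perm (Fin n),
        phi σ (∑ i : Fin n, ∑ j ∈ Finset.Ioi i,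
            (X (i, true) * X (j, true) + X (i, false) * X (j, false)))
          = ∑ i : Fin n, ∑ j ∈ Finset.Ioi i,
              (X (i, true) * X (j, true) + X (i, false) * X (j, false))) ∧
      piMap (∑ i : Fin n, ∑ j ∈ Finset.Ioi i,
          (X (i, true) * X (j, true) + X (i, false) * X (j, false)))
        = 2 • (∑ i : Fin n, ∑ j ∈ Finset.Ioi i, X i * X j)) ∧
    (¬ ∀ Q : MvPolynomial (Fin n) ℤ, (∀ σ : Equiv.Perm (Fin n), psi σ Q = Q) →
      ∃ P : MvPolynomial (Fin n × Bool) ℤ,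
        (∀ σ : Equiv.Perm (Fin n), phi σ P = P) ∧ piMap P = Q) ∧
    (∃ Q : MvPolynomial (Fin n) ℤ,
      (∀ σ : Equiv.Perm (Fin n), psi σ Q = Q) ∧
      (¬ ∃ P : MvPolynomial (Fin n × Bool) ℤ,
        (∀ σ : Equiv.Perm (Fin n), phi σ P = P) ∧ piMap P = Q) ∧
      (∃ P : MvPolynomial (Fin n × Bool) ℤ,
        (∀ σ : Equiv.Perm (Fin n), phi σ P = P) ∧ piMap P = 2 • Q)) := by
  refine ⟨fun σ => psi_t' σ, no_lift hn, ⟨fun σ => phi_P0' σ, piMap_P0'⟩, ?_, ?_⟩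
  · intro hall
    exact no_lift hn (hall _ (fun σ => psi_t' σ))
  · exact ⟨∑ i : Fin n, ∑ j ∈ Finset.Ioi i, X i * X j, fun σ => psi_t' σ, no_lift hn,
      ∑ i : Fin n, ∑ j ∈ Finset.Ioi i,
        (X (i, true) * X (j, true) + X (i, false) * X (j, false)),
      fun σ => phi_P0' σ, piMap_P0'⟩
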